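/- In the setting of Problem 2, let 𝒦 = ℋ ⊕ 𝒢_1 ⊕ ⋯ ⊕ 𝒢_m, let A : 𝒦 → 2^𝒦 be defined by A(x, v_1,…,v_m) = ( ∂f(x) − z + Σ_{i=1}^m L_i^* v_i ) × ∏_{i=1}^m ( −L_i x + ∂g_i^*(v_i) + r_i ), and let B : 𝒦 → 𝒦 be defined by B(x, v_1,…,v_m) = ( ∇h(x), ∇ℓ_1^*(v_1), …, ∇ℓ_m^*(v_m) ). If (x̄, v̄_1,…,v̄_m) ∈ zer(A+B), i.e. 0 ∈ A(x̄, v̄_1,…,v̄_m) + B(x̄, v̄_1,…,v̄_m), then x̄ is а solution of the primal problem: minimize over x ∈ ℋ the quantity f(x) + Σ_{i=1}^m (g_i □ ℓ_i)(L_i x − r_i) + h(x) − ⟨x,z⟩, and (v̄_1,…,v̄_m) is a solution of the dual problem: minimize over (v_1,…,v_m) ∈ 𝒢_1 × ⋯ × 𝒢_m the quantity (f^* □ h^*)( z − Σ_{i=1}^m L_i^* v_i ) + Σ_{i=1}^m ( g_i^*(v_i) + ℓ_i^*(v_i) + ⟨v_i, r_i⟩ ). -/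

import Mathlib

open scoped RealInnerProductSpace

noncomputable section

variable {E : Type*} [NormedAddCommGroup E] [InnerProductSpace ℝ E]

/-- The class Γ₀ : proper, lower semicontinuous, convex functions with values in ]-∞,+∞]. -/
def Gamma0 (f : E → EReal) : Prop :=
  (∃ x, f x ≠ ⊤) ∧ (∀ x, f x ≠ ⊥) ∧ LowerSemicontinuous f ∧
    ∀ x y : E, ∀ t : ℝ, 0 ≤ t → t ≤ 1 →
      f (t • x + (1 - t) • y) ≤ (t : EReal) * f x + ((1 - t : ℝ) : EReal) * f y

/-- Strong convexity (with some modulus σ > 0) for `EReal`-valued functions. -/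
def StronglyConvexE (f : E → EReal) : Prop :=
  ∃ σ : ℝ, 0 < σ ∧ ∀ x y : E, ∀ t : ℝ, 0 ≤ t → t ≤ 1 →
    f (t • x + (1 - t) • y) + ((σ / 2 * t * (1 - t) * ‖x - y‖ ^ 2 : ℝ) : EReal)
      ≤ (t : EReal) * f x + ((1 - t : ℝ) : EReal) * f y

/-- The subdifferential of `f` at `x`. -/
def subdiff (f : E → EReal) (x : E) : Set E :=
  {u | ∀ y, ((⟪y - x, u⟫ : ℝ) : EReal) + f x ≤ f y}

/-- The Fenchel conjugate of `f`. -/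
def conj (f : E → EReal) (u : E) : EReal := ⨆ x, ((⟪x, u⟫ : ℝ) : EReal) - f x

/-- The infimal convolution of `f` and `g`. -/
def infConv (f g : E → EReal) (x : E) : EReal := ⨅ y, f y + g (x - y)


section mylemmas
variable {E : Type*} [NormedAddCommGroup E] [InnerProductSpace ℝ E]

lemma ereal_cases (x : EReal) : x = ⊥ ∨ (∃ a : ℝ, x = (a : EReal)) ∨ x = ⊤ := by
  induction x using EReal.rec with
  | bot => exact Or.inl rfl
  | coe a => exact Or.inr (Or.inl ⟨a, rfl⟩)
  | top => exact Or.inr (Or.inr rfl)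

lemma my_coe_sum {ι : Type*} (s : Finset ι) (c : ι → ℝ) :
    ((∑ i ∈ s, c i : ℝ) : EReal) = ∑ i ∈ s, (c i : EReal) :=
  map_sum (⟨⟨(fun r : ℝ => (r : EReal)), rfl⟩, EReal.coe_add⟩ : ℝ →+ EReal) c s

lemma fy (f : E → EReal) (x v : E) : ((⟪x, v⟫ : ℝ) : EReal) - f x ≤ conj f v :=
  le_iSup (fun y => ((⟪y, v⟫ : ℝ) : EReal) - f y) x

/-- from an upper bound on the conjugate, a lower affine bound on `f`. -/
lemma lower_of_conj_le {f : E → EReal} {v : E} {b : ℝ} (h : conj f v ≤ (b : EReal)) (x : E) :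
    (((⟪x, v⟫ - b : ℝ)) : EReal) ≤ f x := by
  have h1 : ((⟪x, v⟫ : ℝ) : EReal) - f x ≤ (b : EReal) := (fy f x v).trans h
  rcases ereal_cases (f x) with hfx | ⟨a, hfx⟩ | hfx
  · rw [hfx] at h1; simp [EReal.sub_bot] at h1
  · rw [hfx] at h1 ⊢
    rw [← EReal.coe_sub] at h1
    exact_mod_cast by linarith [EReal.coe_le_coe_iff.1 h1]
  · rw [hfx]; exact le_top

/-- from a lower affine bound on `f`, an upper bound on the conjugate. -/
lemma conj_le_of_lower {f : E → EReal} {v : E} {b : ℝ}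
    (h : ∀ x, (((⟪x, v⟫ - b : ℝ)) : EReal) ≤ f x) : conj f v ≤ (b : EReal) := by
  refine iSup_le fun y => ?_
  have h1 := h y
  rcases ereal_cases (f y) with hfy | ⟨a, hfy⟩ | hfy
  · rw [hfy, le_bot_iff] at h1; exact absurd h1 (EReal.coe_ne_bot _)
  · rw [hfy] at h1 ⊢
    rw [← EReal.coe_sub]
    exact_mod_cast by linarith [EReal.coe_le_coe_iff.1 h1]
  · rw [hfy]; simp [EReal.sub_top]

lemma subdiff_real {f : E → EReal} (hproper : ∃ y, f y ≠ ⊤) (hnb : ∀ y, f y ≠ ⊥)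
    {x u : E} (hu : u ∈ subdiff f x) : ∃ a : ℝ, f x = (a : EReal) := by
  rcases ereal_cases (f x) with hfx | ⟨a, hfx⟩ | hfx
  · exact absurd hfx (hnb x)
  · exact ⟨a, hfx⟩
  · obtain ⟨y, hy⟩ := hproper
    have h1 := hu y
    rw [hfx] at h1
    rw [EReal.coe_add_top, top_le_iff] at h1
    exact absurd h1 hy

lemma conj_le_of_subdiff {f : E → EReal} (hnb : ∀ y, f y ≠ ⊥) {x u : E} {a : ℝ}
    (hu : u ∈ subdiff f x) (hx : f x = (a : EReal)) :
    conj f u ≤ (((⟪x, u⟫ - a : ℝ)) : EReal) := by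
  refine iSup_le fun y => ?_
  have h := hu y
  rw [hx] at h
  rcases ereal_cases (f y) with hfy | ⟨b, hfy⟩ | hfy
  · exact absurd hfy (hnb y)
  · rw [hfy] at h
    rw [hfy, ← EReal.coe_sub]
    rw [← EReal.coe_add] at h
    have h2 := EReal.coe_le_coe_iff.1 h
    rw [inner_sub_left] at h2
    exact_mod_cast by linarith
  · rw [hfy]; simp [EReal.sub_top]

lemma fy_real {f : E → EReal} {x : E} {a : ℝ} (hx : f x = (a : EReal)) (u : E) :
    (((⟪x, u⟫ - a : ℝ)) : EReal) ≤ conj f u := by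
  have := fy f x u
  rwa [hx, ← EReal.coe_sub] at this

variable [CompleteSpace E]

lemma grad_ineq {φ : E → ℝ} (hc : ConvexOn ℝ Set.univ φ) {x Gx : E}
    (hg : HasGradientAt φ Gx x) (y : E) : φ x + ⟪y - x, Gx⟫ ≤ φ y := by
  set ψ : ℝ → ℝ := fun t => φ (x + t • (y - x)) with hψdef
  have hline : HasDerivAt (fun t : ℝ => x + t • (y - x)) (y - x) 0 := by
    simpa using ((hasDerivAt_id (0:ℝ)).smul_const (y - x)).const_add x
  have hψd : HasDerivAt ψ ⟪Gx, y - x⟫ 0 := by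
    have h0 : HasFDerivAt φ (InnerProductSpace.toDual ℝ E Gx) ((fun t : ℝ => x + t • (y - x)) 0) := by
      simpa using hg.hasFDerivAt
    have h3 := h0.comp_hasDerivAt 0 hline
    simp only [InnerProductSpace.toDual_apply_apply] at h3
    exact h3
  have hψc : ConvexOn ℝ Set.univ ψ := by
    have h2 := hc.comp_affineMap (AffineMap.lineMap x y : ℝ →ᵃ[ℝ] E)
    have : (φ ∘ (AffineMap.lineMap x y : ℝ →ᵃ[ℝ] E)) = ψ := by
      funext t
      simp only [Function.comp_apply, AffineMap.lineMap_apply_module, hψdef]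
      congr 1
      module
    rw [this] at h2
    simpa using h2
  have hs := hψc.le_slope_of_hasDerivAt (Set.mem_univ 0) (Set.mem_univ 1) one_pos hψd
  rw [slope_def_field] at hs
  have h0 : ψ 0 = φ x := by simp [hψdef]
  have h1 : ψ 1 = φ y := by simp [hψdef]
  rw [h0, h1] at hs
  rw [real_inner_comm]
  have := hs
  simp at this
  linarith


def eepi (f : E → EReal) : Set (E × ℝ) := {p | f p.1 ≤ (p.2 : EReal)}

lemma eepi_closed {f : E → EReal} (hlsc : LowerSemicontinuous f) : IsClosed (eepi f) := by
  rw [← isOpen_compl_iff, isOpen_iff_mem_nhds]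
  rintro ⟨x0, t0⟩ hp
  have hlt : ((t0 : ℝ) : EReal) < f x0 := not_le.1 hp
  obtain ⟨c, hc1, hc2⟩ := EReal.lt_iff_exists_real_btwn.1 hlt
  have h1 : ∀ᶠ x in nhds x0, (c : EReal) < f x := hlsc x0 _ hc2
  have h2 : Set.Iio c ∈ nhds t0 := Iio_mem_nhds (EReal.coe_lt_coe_iff.1 hc1)
  rw [nhds_prod_eq]
  refine Filter.mem_of_superset (Filter.prod_mem_prod h1 h2) ?_
  rintro ⟨x, t⟩ ⟨hx, ht⟩
  simp only [eepi, Set.mem_compl_iff, Set.mem_setOf_eq, not_le]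
  exact lt_trans (EReal.coe_lt_coe_iff.2 ht) hx

lemma real_of_le_coe {x : EReal} (hnb : x ≠ ⊥) {t : ℝ} (h : x ≤ (t : EReal)) :
    ∃ r : ℝ, x = (r : EReal) ∧ r ≤ t := by
  rcases ereal_cases x with hx | ⟨r, hx⟩ | hx
  · exact absurd hx hnb
  · exact ⟨r, hx, by rw [hx] at h; exact_mod_cast h⟩
  · rw [hx, top_le_iff] at h; exact absurd h.symm (by simp)

lemma eepi_convex {f : E → EReal} (hf : Gamma0 f) : Convex ℝ (eepi f) := by
  rintro ⟨x1, t1⟩ h1 ⟨x2, t2⟩ h2 a b ha hb hab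
  obtain ⟨r1, hr1, hr1t⟩ := real_of_le_coe (hf.2.1 x1) h1
  obtain ⟨r2, hr2, hr2t⟩ := real_of_le_coe (hf.2.1 x2) h2
  have hb' : b = 1 - a := by linarith
  have hkey := hf.2.2.2 x1 x2 a ha (by linarith)
  rw [hr1, hr2, ← hb'] at hkey
  show f (a • x1 + b • x2) ≤ (((a • (x1, t1) + b • (x2, t2)).2 : ℝ) : EReal)
  refine hkey.trans ?_
  rw [← EReal.coe_mul, ← EReal.coe_mul, ← EReal.coe_add]
  have : (a • (x1, t1) + b • (x2, t2)).2 = a * t1 + b * t2 := rfl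
  rw [this]
  exact EReal.coe_le_coe_iff.2 (by nlinarith)

lemma eepi_separate {f : E → EReal} (hf : Gamma0 f) {x : E} {c : ℝ} (hxc : (x, c) ∉ eepi f) :
    ∃ (v : E) (s u : ℝ), (∀ (y : E) (t : ℝ), f y ≤ (t : EReal) → ⟪v, y⟫ + t * s < u) ∧
      u < ⟪v, x⟫ + c * s := by
  obtain ⟨φ, u, hsep, hx⟩ :=
    geometric_hahn_banach_closed_point (eepi_convex hf) (eepi_closed hf.2.2.1) hxc
  set v := (InnerProductSpace.toDual ℝ E).symm (φ.comp (ContinuousLinearMap.inl ℝ E ℝ)) with hv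
  have hrep : ∀ (y : E) (t : ℝ), φ (y, t) = ⟪v, y⟫ + t * φ (0, 1) := by
    intro y t
    have hsplit : (y, t) = (y, (0:ℝ)) + t • ((0:E), (1:ℝ)) := by
      simp [Prod.ext_iff]
    rw [hsplit, map_add, map_smul]
    have h1 : φ (y, (0:ℝ)) = ⟪v, y⟫ := by
      rw [hv]
      rw [InnerProductSpace.toDual_symm_apply]
      rfl
    rw [h1]
    simp [smul_eq_mul]
  refine ⟨v, φ (0, 1), u, ?_, ?_⟩
  · intro y t hyt
    have := hsep (y, t) hyt
    rwa [hrep] at this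
  · have := hx
    rwa [hrep] at this

lemma minorant_of_sep {f : E → EReal} (hnb : ∀ y, f y ≠ ⊥) {v : E} {s u : ℝ} (hs : s < 0)
    (hsep : ∀ (y : E) (t : ℝ), f y ≤ (t : EReal) → ⟪v, y⟫ + t * s < u) :
    ∀ y, (((⟪y, (-(1/s)) • v⟫ - (-(u/s)) : ℝ)) : EReal) ≤ f y := by
  intro y
  rcases ereal_cases (f y) with hfy | ⟨ry, hfy⟩ | hfy
  · exact absurd hfy (hnb y)
  · rw [hfy]
    have h1 := hsep y ry (le_of_eq hfy)
    refine EReal.coe_le_coe_iff.2 ?_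
    rw [real_inner_smul_right, real_inner_comm v y]
    rw [div_eq_mul_inv, div_eq_mul_inv, one_mul]
    have hinv : s * s⁻¹ = 1 := mul_inv_cancel₀ (ne_of_lt hs)
    have key : -s⁻¹ * ⟪v, y⟫ - -(u * s⁻¹) - ry * (s * s⁻¹)
        = (-s⁻¹) * ((⟪v, y⟫ + ry * s) - u) := by ring
    rw [hinv, mul_one] at key
    have h2 : (-s⁻¹) * ((⟪v, y⟫ + ry * s) - u) ≤ 0 :=
      mul_nonpos_of_nonneg_of_nonpos (by simp [inv_nonpos]; linarith) (by linarith)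
    linarith
  · rw [hfy]; exact le_top

lemma exists_affine_minorant {f : E → EReal} (hf : Gamma0 f) :
    ∃ (v : E) (c : ℝ), ∀ y, (((⟪y, v⟫ - c : ℝ)) : EReal) ≤ f y := by
  obtain ⟨y0, hy0⟩ := hf.1
  rcases ereal_cases (f y0) with h | ⟨b0, hb0⟩ | h
  · exact absurd h (hf.2.1 y0)
  · have hnot : (y0, b0 - 1) ∉ eepi f := by
      simp only [eepi, Set.mem_setOf_eq, hb0, not_le]
      exact EReal.coe_lt_coe_iff.2 (by linarith)
    obtain ⟨v, s, u, hsep, hx⟩ := eepi_separate hf hnot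
    have hs : s < 0 := by
      have h1 := hsep y0 b0 (le_of_eq hb0)
      nlinarith
    exact ⟨(-(1/s)) • v, -(u/s), minorant_of_sep hf.2.1 hs hsep⟩
  · exact absurd h hy0

lemma biconj_le {f : E → EReal} (hf : Gamma0 f) (x : E) : f x ≤ conj (conj f) x := by
  rw [← EReal.ge_of_forall_gt_iff_ge]
  intro c hc
  have hxc : (x, c) ∉ eepi f := by
    simp only [eepi, Set.mem_setOf_eq, not_le]
    exact hc
  obtain ⟨v, s, u, hsep, hx⟩ := eepi_separate hf hxc
  obtain ⟨y0, hy0⟩ := hf.1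
  obtain ⟨b0, hb0⟩ : ∃ b0 : ℝ, f y0 = (b0 : EReal) := by
    rcases ereal_cases (f y0) with h | hh | h
    · exact absurd h (hf.2.1 y0)
    · exact hh
    · exact absurd h hy0
  have hs0 : s ≤ 0 := by
    by_contra hpos
    push_neg at hpos
    set t : ℝ := max b0 ((u - ⟪v, y0⟫) / s) with ht
    have h1 : f y0 ≤ (t : EReal) := by
      rw [hb0]; exact EReal.coe_le_coe_iff.2 (le_max_left _ _)
    have h2 := hsep y0 t h1
    have h3 : (u - ⟪v, y0⟫) / s ≤ t := le_max_right _ _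
    rw [div_le_iff₀ hpos] at h3
    linarith
  rcases hs0.lt_or_eq with hs | hs
  · set w := (-(1/s)) • v with hw
    have hmin := minorant_of_sep hf.2.1 hs hsep
    have hconj : conj f w ≤ ((-(u/s) : ℝ) : EReal) := conj_le_of_lower hmin
    have hfyx : ((⟪w, x⟫ : ℝ) : EReal) - conj f w ≤ conj (conj f) x := fy (conj f) w x
    have hcle : (c : EReal) ≤ ((⟪w, x⟫ : ℝ) : EReal) - ((-(u/s) : ℝ) : EReal) := by
      rw [← EReal.coe_sub]
      refine EReal.coe_le_coe_iff.2 ?_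
      rw [hw, real_inner_smul_left]
      rw [div_eq_mul_inv, div_eq_mul_inv, one_mul]
      have hinv : s * s⁻¹ = 1 := mul_inv_cancel₀ (ne_of_lt hs)
      have key : -s⁻¹ * ⟪v, x⟫ - -(u * s⁻¹) - c * (s * s⁻¹)
          = (-s⁻¹) * ((⟪v, x⟫ + c * s) - u) := by ring
      rw [hinv, mul_one] at key
      have h2 : 0 ≤ (-s⁻¹) * ((⟪v, x⟫ + c * s) - u) :=
        mul_nonneg (by simp [inv_nonpos]; linarith) (by linarith)
      linarith
    exact hcle.trans ((EReal.sub_le_sub le_rfl hconj).trans hfyx)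
  · subst hs
    obtain ⟨w0, c0, hmin⟩ := exists_affine_minorant hf
    have hvxu : 0 < ⟪v, x⟫ - u := by
      have := hx; simp only [mul_zero] at this; linarith
    set lam : ℝ := max 0 ((c - ⟪x, w0⟫ + c0) / (⟪v, x⟫ - u)) with hlam
    have hlam0 : 0 ≤ lam := le_max_left _ _
    set w : E := w0 + lam • v with hw
    have hminw : ∀ y, (((⟪y, w⟫ - (lam * u + c0) : ℝ)) : EReal) ≤ f y := by
      intro y
      rcases ereal_cases (f y) with hfy | ⟨ry, hfy⟩ | hfy
      · exact absurd hfy (hf.2.1 y)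
      · rw [hfy]
        have h1 : ⟪y, w0⟫ - c0 ≤ ry := by
          have := hmin y; rw [hfy] at this; exact_mod_cast this
        have h2 : ⟪v, y⟫ < u := by
          have := hsep y ry (le_of_eq hfy); simpa using this
        refine EReal.coe_le_coe_iff.2 ?_
        rw [hw, inner_add_right, real_inner_smul_right]
        have hcomm : ⟪y, v⟫ = ⟪v, y⟫ := real_inner_comm v y
        nlinarith [mul_le_mul_of_nonneg_left h2.le hlam0, hcomm]
      · rw [hfy]; exact le_top
    have hconj : conj f w ≤ ((lam * u + c0 : ℝ) : EReal) := conj_le_of_lower hminw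
    have hfyx : ((⟪w, x⟫ : ℝ) : EReal) - conj f w ≤ conj (conj f) x := fy (conj f) w x
    have hcle : (c : EReal) ≤ ((⟪w, x⟫ : ℝ) : EReal) - ((lam * u + c0 : ℝ) : EReal) := by
      rw [← EReal.coe_sub]
      refine EReal.coe_le_coe_iff.2 ?_
      rw [hw, inner_add_left, real_inner_smul_left]
      have hdiv : (c - ⟪x, w0⟫ + c0) / (⟪v, x⟫ - u) ≤ lam := le_max_right _ _
      rw [div_le_iff₀ hvxu] at hdiv
      have hxw : ⟪x, w0⟫ = ⟪w0, x⟫ := real_inner_comm w0 x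
      nlinarith
    exact hcle.trans ((EReal.sub_le_sub le_rfl hconj).trans hfyx)

lemma conj_real_of_subdiff {f : E → EReal} (hf : Gamma0 f) {v q : E}
    (hq : q ∈ subdiff (conj f) v) : ∃ a : ℝ, conj f v = (a : EReal) := by
  obtain ⟨y0, hy0top⟩ := hf.1
  obtain ⟨b0, hb0⟩ : ∃ b : ℝ, f y0 = (b : EReal) := by
    rcases ereal_cases (f y0) with h | hh | h
    · exact absurd h (hf.2.1 y0)
    · exact hh
    · exact absurd h hy0top
  have hnb : ∀ w, conj f w ≠ ⊥ := by
    intro w hbot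
    have h1 := fy_real hb0 w
    rw [hbot, le_bot_iff] at h1
    exact EReal.coe_ne_bot _ h1
  have hproper : ∃ w, conj f w ≠ ⊤ := by
    obtain ⟨w0, c0, hmin⟩ := exists_affine_minorant hf
    refine ⟨w0, fun htop => ?_⟩
    have h1 := conj_le_of_lower hmin
    rw [htop, top_le_iff] at h1
    exact EReal.coe_ne_top _ h1
  exact subdiff_real hproper hnb hq

lemma infConv_le {F G : E → EReal} (x y : E) : infConv F G x ≤ F y + G (x - y) :=
  iInf_le (fun y => F y + G (x - y)) y

lemma infConv_ge1 {F G : E → EReal} {v : E} {a b : ℝ}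
    (hFa : conj F v ≤ (a : EReal)) (hGb : conj G v ≤ (b : EReal)) (x : E) :
    ((⟪x, v⟫ - a - b : ℝ) : EReal) ≤ infConv F G x := by
  refine le_iInf fun y => ?_
  have h1 : ((⟪y, v⟫ - a : ℝ) : EReal) ≤ F y := lower_of_conj_le hFa y
  have h2 : ((⟪x - y, v⟫ - b : ℝ) : EReal) ≤ G (x - y) := lower_of_conj_le hGb (x - y)
  have hsum : ⟪y, v⟫ + ⟪x - y, v⟫ = ⟪x, v⟫ := by
    rw [← inner_add_left]
    congr 1
    abel
  calc ((⟪x, v⟫ - a - b : ℝ) : EReal)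
      = ((⟪y, v⟫ - a : ℝ) : EReal) + ((⟪x - y, v⟫ - b : ℝ) : EReal) := by
        rw [← EReal.coe_add]; congr 1; linarith
    _ ≤ F y + G (x - y) := add_le_add h1 h2

lemma infConv_ge2 {F G : E → EReal} {x0 : E} {a b : ℝ}
    (hF : ∀ u, ((⟪x0, u⟫ - a : ℝ) : EReal) ≤ F u)
    (hG : ∀ u, ((⟪x0, u⟫ - b : ℝ) : EReal) ≤ G u) (w : E) :
    ((⟪x0, w⟫ - a - b : ℝ) : EReal) ≤ infConv F G w := by
  refine le_iInf fun u => ?_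
  have hsum : ⟪x0, u⟫ + ⟪x0, w - u⟫ = ⟪x0, w⟫ := by
    rw [← inner_add_right]
    congr 1
    abel
  calc ((⟪x0, w⟫ - a - b : ℝ) : EReal)
      = ((⟪x0, u⟫ - a : ℝ) : EReal) + ((⟪x0, w - u⟫ - b : ℝ) : EReal) := by
        rw [← EReal.coe_add]; congr 1; linarith
    _ ≤ F u + G (w - u) := add_le_add (hF u) (hG (w - u))

lemma conv_of_conj {F : E → EReal} (hnb : ∀ y, F y ≠ ⊥) {φ : E → ℝ}
    (hφ : ∀ v, ((φ v : ℝ) : EReal) = conj F v) : ConvexOn ℝ Set.univ φ := by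
  refine ⟨convex_univ, fun v _ w _ a b ha hb hab => ?_⟩
  have key : conj F (a • v + b • w) ≤ ((a * φ v + b * φ w : ℝ) : EReal) := by
    refine iSup_le fun y => ?_
    rcases ereal_cases (F y) with h | ⟨ry, h⟩ | h
    · exact absurd h (hnb y)
    · rw [h]
      have h1 : ⟪y, v⟫ - ry ≤ φ v := by
        have h1' := fy_real h v
        rw [← hφ v] at h1'
        exact_mod_cast h1'
      have h2 : ⟪y, w⟫ - ry ≤ φ w := by
        have h2' := fy_real h w
        rw [← hφ w] at h2'
        exact_mod_cast h2'
      rw [← EReal.coe_sub]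
      refine EReal.coe_le_coe_iff.2 ?_
      rw [inner_add_right, real_inner_smul_right, real_inner_smul_right]
      have h3 : a * ry + b * ry = ry := by rw [← add_mul, hab, one_mul]
      nlinarith [mul_le_mul_of_nonneg_left h1 ha, mul_le_mul_of_nonneg_left h2 hb]
    · rw [h]
      rw [EReal.sub_top]
      exact bot_le
  rw [← hφ (a • v + b • w)] at key
  have := EReal.coe_le_coe_iff.1 key
  simpa [smul_eq_mul] using this

end mylemmas

/-- In the setting of Problem 2, if `(x̄, v̄₁,…,v̄ₘ) ∈ zer(A + B)` with
`A(x,v) = (∂f(x) − z + Σᵢ Lᵢ* vᵢ) × ∏ᵢ(−Lᵢ x + ∂gᵢ*(vᵢ) + rᵢ)` and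
`B(x,v) = (∇h(x), ∇ℓ₁*(v₁), …, ∇ℓₘ*(vₘ))`, then `x̄` solves the primal problem and
`(v̄₁,…,v̄ₘ)` solves the dual problem.  (`hh` is the function `h`, `h'` its gradient,
`lstar i` the — real-valued — conjugate `ℓᵢ*`, and `lgrad i` its gradient.) -/
theorem statement6
    {H : Type*} [NormedAddCommGroup H] [InnerProductSpace ℝ H] [CompleteSpace H]
    {m : ℕ} (hm : 0 < m)
    {G : Fin m → Type*} [∀ i, NormedAddCommGroup (G i)] [∀ i, InnerProductSpace ℝ (G i)]
    [∀ i, CompleteSpace (G i)]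
    (z : H)
    (f : H → EReal) (hf : Gamma0 f)
    (hh : H → ℝ) (hhconv : ConvexOn ℝ Set.univ hh)
    (h' : H → H) (hh' : ∀ x, HasGradientAt hh (h' x) x)
    (βh : ℝ) (hβh : 0 < βh) (hhlip : LipschitzWith βh.toNNReal h')
    (r : ∀ i, G i)
    (g : ∀ i, G i → EReal) (hg : ∀ i, Gamma0 (g i))
    (l : ∀ i, G i → EReal) (hl : ∀ i, Gamma0 (l i)) (hlsc : ∀ i, StronglyConvexE (l i))
    (L : ∀ i, H →L[ℝ] G i) (hL : ∀ i, L i ≠ 0)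
    (lstar : ∀ i, G i → ℝ) (hlstar : ∀ i, ∀ v : G i, (lstar i v : EReal) = conj (l i) v)
    (lgrad : ∀ i, G i → G i) (hlgrad : ∀ i, ∀ v : G i, HasGradientAt (lstar i) (lgrad i v) v)
    (ν : Fin m → ℝ) (hν : ∀ i, 0 < ν i) (hliplg : ∀ i, LipschitzWith (ν i).toNNReal (lgrad i))
    -- the qualification condition (10) of Problem 2 :
    -- z ∈ ran(∂f + Σᵢ Lᵢ*(∂gᵢ □ ∂ℓᵢ)(Lᵢ · − rᵢ) + ∇h)
    (hran : ∃ x : H, ∃ u ∈ subdiff f x, ∃ w : ∀ i, G i,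
      (∀ i, ∃ a b : G i, L i x - r i = a + b ∧ w i ∈ subdiff (g i) a ∧ w i ∈ subdiff (l i) b) ∧
      z = u + ∑ i, ContinuousLinearMap.adjoint (L i) (w i) + h' x)
    -- the operators A and B on 𝒦 = ℋ ⊕ 𝒢₁ ⊕ ⋯ ⊕ 𝒢ₘ
    (A : (H × ∀ i, G i) → Set (H × ∀ i, G i))
    (hA : ∀ p q : H × ∀ i, G i, q ∈ A p ↔
      (q.1 - ∑ i, ContinuousLinearMap.adjoint (L i) (p.2 i) + z ∈ subdiff f p.1) ∧
      ∀ i, q.2 i + L i p.1 - r i ∈ subdiff (conj (g i)) (p.2 i))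
    (B : (H × ∀ i, G i) → H × ∀ i, G i)
    (hB : ∀ p : H × ∀ i, G i, B p = (h' p.1, fun i => lgrad i (p.2 i)))
    -- (x̄, v̄) ∈ zer(A + B)
    (xbar : H) (vbar : ∀ i, G i)
    (hzero : ∃ a ∈ A (xbar, vbar), a + B (xbar, vbar) = 0) :
    -- x̄ solves the primal problem …
    ((∀ x : H,
        f xbar + (∑ i, infConv (g i) (l i) (L i xbar - r i))
            + ((hh xbar - ⟪xbar, z⟫ : ℝ) : EReal)
          ≤ f x + (∑ i, infConv (g i) (l i) (L i x - r i)) + ((hh x - ⟪x, z⟫ : ℝ) : EReal))) ∧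
    -- … and (v̄₁,…,v̄ₘ) solves the dual problem
    (∀ v : ∀ i, G i,
      infConv (conj f) (conj fun x : H => ((hh x : ℝ) : EReal))
            (z - ∑ i, ContinuousLinearMap.adjoint (L i) (vbar i))
          + ∑ i, (conj (g i) (vbar i) + conj (l i) (vbar i) + ((⟪vbar i, r i⟫ : ℝ) : EReal))
        ≤ infConv (conj f) (conj fun x : H => ((hh x : ℝ) : EReal))
            (z - ∑ i, ContinuousLinearMap.adjoint (L i) (v i))
          + ∑ i, (conj (g i) (v i) + conj (l i) (v i) + ((⟪v i, r i⟫ : ℝ) : EReal))) := by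
  
  classical
  obtain ⟨a, haA, hab0⟩ := hzero
  rw [hB] at hab0
  have ha1 : a.1 = -h' xbar := by
    have h1 := congrArg Prod.fst hab0
    simp only [Prod.fst_add, Prod.fst_zero] at h1
    exact eq_neg_of_add_eq_zero_left h1
  have ha2 : ∀ i, a.2 i = -(lgrad i (vbar i)) := by
    intro i
    have h1 := congrArg (fun p : H × ∀ i, G i => p.2 i) hab0
    simp only [Prod.snd_add, Pi.add_apply, Prod.snd_zero, Pi.zero_apply] at h1
    exact eq_neg_of_add_eq_zero_left h1
  obtain ⟨hsub1, hsub2⟩ := (hA (xbar, vbar) a).mp haA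
  set u0 : H := z - h' xbar - ∑ i, (ContinuousLinearMap.adjoint (L i)) (vbar i) with hu0def
  have hu0 : u0 ∈ subdiff f xbar := by
    have h1 := hsub1
    rw [ha1] at h1
    have he : -h' xbar - ∑ i, (ContinuousLinearMap.adjoint (L i)) (vbar i) + z = u0 := by
      rw [hu0def]; abel
    rwa [he] at h1
  set q : ∀ i, G i := fun i => (L i xbar - r i) - lgrad i (vbar i) with hqdef
  have hqi : ∀ i, q i ∈ subdiff (conj (g i)) (vbar i) := by
    intro i
    have h2 := hsub2 i
    rw [ha2 i] at h2
    have he : -(lgrad i (vbar i)) + L i xbar - r i = q i := by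
      rw [hqdef]; abel
    rwa [he] at h2
  obtain ⟨Fb, hFb⟩ := subdiff_real hf.1 hf.2.1 hu0
  have hGam : ∀ i, ∃ c : ℝ, conj (g i) (vbar i) = (c : EReal) := fun i =>
    conj_real_of_subdiff (hg i) (hqi i)
  choose Γ hΓ using hGam
  have hΛ : ∀ i, conj (l i) (vbar i) = ((lstar i (vbar i) : ℝ) : EReal) := fun i =>
    (hlstar i (vbar i)).symm
  have hlconv : ∀ i, ConvexOn ℝ Set.univ (lstar i) := fun i =>
    conv_of_conj (hl i).2.1 (hlstar i)
  have hpi : ∀ i, lgrad i (vbar i) ∈ subdiff (conj (l i)) (vbar i) := by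
    intro i w
    have hg1 := grad_ineq (hlconv i) (hlgrad i (vbar i)) w
    rw [← hlstar i w, ← hlstar i (vbar i), ← EReal.coe_add]
    exact EReal.coe_le_coe_iff.2 (by linarith)
  have hgnb : ∀ i w, conj (g i) w ≠ ⊥ := by
    intro i w hbot
    obtain ⟨y0, hy0top⟩ := (hg i).1
    obtain ⟨b0, hb0⟩ : ∃ b : ℝ, g i y0 = (b : EReal) := by
      rcases ereal_cases (g i y0) with h | hh | h
      · exact absurd h ((hg i).2.1 y0)
      · exact hh
      · exact absurd h hy0top
    have h1 := fy_real hb0 w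
    rw [hbot, le_bot_iff] at h1
    exact EReal.coe_ne_bot _ h1
  have hlnb : ∀ i w, conj (l i) w ≠ ⊥ := by
    intro i w
    rw [← hlstar i w]
    exact EReal.coe_ne_bot _
  have hgq : ∀ i, g i (q i) ≤ ((⟪vbar i, q i⟫ - Γ i : ℝ) : EReal) :=
    fun i => (biconj_le (hg i) (q i)).trans
      (conj_le_of_subdiff (hgnb i) (hqi i) (hΓ i))
  have hlp : ∀ i, l i (lgrad i (vbar i)) ≤
      ((⟪vbar i, lgrad i (vbar i)⟫ - lstar i (vbar i) : ℝ) : EReal) :=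
    fun i => (biconj_le (hl i) _).trans
      (conj_le_of_subdiff (hlnb i) (hpi i) (hΛ i))
  have hconjfu0 : conj f u0 ≤ ((⟪xbar, u0⟫ - Fb : ℝ) : EReal) :=
    conj_le_of_subdiff hf.2.1 hu0 hFb
  have hHsub : h' xbar ∈ subdiff (fun x : H => ((hh x : ℝ) : EReal)) xbar := by
    intro y
    have h1 := grad_ineq hhconv (hh' xbar) y
    rw [← EReal.coe_add]
    exact EReal.coe_le_coe_iff.2 (by linarith)
  have hconjh : conj (fun x : H => ((hh x : ℝ) : EReal)) (h' xbar) ≤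
      ((⟪xbar, h' xbar⟫ - hh xbar : ℝ) : EReal) :=
    conj_le_of_subdiff (fun y => EReal.coe_ne_bot _) hHsub rfl
  have hadj : ∀ (i : Fin m) (x' : H) (w : G i),
      ⟪L i x', w⟫ = ⟪x', (ContinuousLinearMap.adjoint (L i)) w⟫ := fun i x' w =>
    (ContinuousLinearMap.adjoint_inner_right (L i) x' w).symm
  constructor
  · -- primal problem
    intro x
    set C : ℝ := Fb
      + (∑ i, (⟪vbar i, q i⟫ - Γ i + (⟪vbar i, lgrad i (vbar i)⟫ - lstar i (vbar i))))
      + (hh xbar - ⟪xbar, z⟫) with hCdef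
    set D : ℝ := (⟪x - xbar, u0⟫ + Fb)
      + (∑ i, (⟪L i x - r i, vbar i⟫ - Γ i - lstar i (vbar i)))
      + (hh xbar + ⟪x - xbar, h' xbar⟫ - ⟪x, z⟫) with hDdef
    have hstep1 : f xbar + (∑ i, infConv (g i) (l i) (L i xbar - r i))
        + ((hh xbar - ⟪xbar, z⟫ : ℝ) : EReal) ≤ ((C : ℝ) : EReal) := by
      rw [hCdef, EReal.coe_add, EReal.coe_add, my_coe_sum]
      refine add_le_add (add_le_add (le_of_eq hFb) ?_) le_rfl
      refine Finset.sum_le_sum fun i _ => ?_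
      have harg : (L i xbar - r i) - q i = lgrad i (vbar i) := by
        show (L i xbar - r i) - ((L i xbar - r i) - lgrad i (vbar i)) = lgrad i (vbar i)
        abel
      have hup : infConv (g i) (l i) (L i xbar - r i) ≤ g i (q i) + l i (lgrad i (vbar i)) := by
        have h1 := infConv_le (F := g i) (G := l i) (L i xbar - r i) (q i)
        rwa [harg] at h1
      refine hup.trans ?_
      rw [EReal.coe_add]
      exact add_le_add (hgq i) (hlp i)
    have hstep3 : ((D : ℝ) : EReal) ≤ f x + (∑ i, infConv (g i) (l i) (L i x - r i))
        + ((hh x - ⟪x, z⟫ : ℝ) : EReal) := by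
      rw [hDdef, EReal.coe_add, EReal.coe_add, my_coe_sum]
      refine add_le_add (add_le_add ?_ ?_) ?_
      · have h1 := hu0 x
        rw [hFb] at h1
        rw [EReal.coe_add]
        exact h1
      · exact Finset.sum_le_sum fun i _ =>
          infConv_ge1 (le_of_eq (hΓ i)) (le_of_eq (hΛ i)) (L i x - r i)
      · refine EReal.coe_le_coe_iff.2 ?_
        have h1 := grad_ineq hhconv (hh' xbar) x
        linarith
    have hCD : C ≤ D := by
      have ei : ∀ i, ⟪L i x - r i, vbar i⟫ =
          ⟪vbar i, q i⟫ + ⟪vbar i, lgrad i (vbar i)⟫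
            + ⟪x - xbar, (ContinuousLinearMap.adjoint (L i)) (vbar i)⟫ := by
        intro i
        have e2a : L i x - r i = (L i xbar - r i) + L i (x - xbar) := by
          rw [map_sub]; abel
        rw [e2a, inner_add_left]
        have e3 : ⟪vbar i, q i⟫ + ⟪vbar i, lgrad i (vbar i)⟫ = ⟪vbar i, L i xbar - r i⟫ := by
          rw [← inner_add_right]
          congr 1
          show (L i xbar - r i) - lgrad i (vbar i) + lgrad i (vbar i) = L i xbar - r i
          abel
        rw [e3, real_inner_comm (L i xbar - r i) (vbar i), hadj i (x - xbar) (vbar i)]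
      have hsum : (∑ i, (⟪L i x - r i, vbar i⟫ - Γ i - lstar i (vbar i)))
          = (∑ i, (⟪vbar i, q i⟫ - Γ i + (⟪vbar i, lgrad i (vbar i)⟫ - lstar i (vbar i))))
            + ∑ i, ⟪x - xbar, (ContinuousLinearMap.adjoint (L i)) (vbar i)⟫ := by
        rw [← Finset.sum_add_distrib]
        exact Finset.sum_congr rfl fun i _ => by rw [ei i]; ring
      have hb2 : ⟪x - xbar, u0⟫ = ⟪x - xbar, z⟫ - ⟪x - xbar, h' xbar⟫
          - ∑ i, ⟪x - xbar, (ContinuousLinearMap.adjoint (L i)) (vbar i)⟫ := by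
        rw [hu0def, inner_sub_right, inner_sub_right, inner_sum]
      have hc2 : ⟪x - xbar, z⟫ = ⟪x, z⟫ - ⟪xbar, z⟫ := inner_sub_left x xbar z
      rw [hCdef, hDdef]
      linarith [hsum, hb2, hc2]
    exact hstep1.trans ((EReal.coe_le_coe_iff.2 hCD).trans hstep3)
  · -- dual problem
    intro v
    have hwbar : z - ∑ i, (ContinuousLinearMap.adjoint (L i)) (vbar i) - u0 = h' xbar := by
      rw [hu0def]; abel
    set C' : ℝ := ((⟪xbar, u0⟫ - Fb) + (⟪xbar, h' xbar⟫ - hh xbar))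
      + ∑ i, (Γ i + lstar i (vbar i) + ⟪vbar i, r i⟫) with hC'def
    set D' : ℝ := (⟪xbar, z - ∑ i, (ContinuousLinearMap.adjoint (L i)) (v i)⟫ - Fb - hh xbar)
      + ∑ i, ((Γ i + ⟪v i - vbar i, q i⟫)
          + (lstar i (vbar i) + ⟪v i - vbar i, lgrad i (vbar i)⟫) + ⟪v i, r i⟫) with hD'def
    have hstep1 : infConv (conj f) (conj fun x : H => ((hh x : ℝ) : EReal))
          (z - ∑ i, (ContinuousLinearMap.adjoint (L i)) (vbar i))
        + ∑ i, (conj (g i) (vbar i) + conj (l i) (vbar i) + ((⟪vbar i, r i⟫ : ℝ) : EReal))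
        ≤ ((C' : ℝ) : EReal) := by
      rw [hC'def, EReal.coe_add, my_coe_sum]
      refine add_le_add ?_ ?_
      · have h1 := infConv_le (F := conj f) (G := conj fun x : H => ((hh x : ℝ) : EReal))
          (z - ∑ i, (ContinuousLinearMap.adjoint (L i)) (vbar i)) u0
        rw [hwbar] at h1
        refine h1.trans ?_
        rw [EReal.coe_add]
        exact add_le_add hconjfu0 hconjh
      · refine Finset.sum_le_sum fun i _ => ?_
        rw [hΓ i, hΛ i, ← EReal.coe_add, ← EReal.coe_add]
    have hstep3 : ((D' : ℝ) : EReal) ≤ infConv (conj f) (conj fun x : H => ((hh x : ℝ) : EReal))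
          (z - ∑ i, (ContinuousLinearMap.adjoint (L i)) (v i))
        + ∑ i, (conj (g i) (v i) + conj (l i) (v i) + ((⟪v i, r i⟫ : ℝ) : EReal)) := by
      rw [hD'def, EReal.coe_add, my_coe_sum]
      refine add_le_add ?_ (Finset.sum_le_sum fun i _ => ?_)
      · exact infConv_ge2 (fun u => fy_real hFb u)
          (fun u => fy_real (f := fun x : H => ((hh x : ℝ) : EReal)) (x := xbar) (a := hh xbar) rfl u)
          (z - ∑ i, (ContinuousLinearMap.adjoint (L i)) (v i))
      · rw [EReal.coe_add, EReal.coe_add]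
        refine add_le_add (add_le_add ?_ ?_) le_rfl
        · have h1 := hqi i (v i)
          rw [hΓ i, ← EReal.coe_add] at h1
          refine le_trans (le_of_eq ?_) h1
          norm_cast
          ring
        · rw [← hlstar i (v i)]
          refine EReal.coe_le_coe_iff.2 ?_
          have h1 := grad_ineq (hlconv i) (hlgrad i (vbar i)) (v i)
          linarith
    have hCD' : C' ≤ D' := by
      have ei : ∀ i, (Γ i + ⟪v i - vbar i, q i⟫)
          + (lstar i (vbar i) + ⟪v i - vbar i, lgrad i (vbar i)⟫) + ⟪v i, r i⟫
          = (Γ i + lstar i (vbar i) + ⟪vbar i, r i⟫)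
            + (⟪xbar, (ContinuousLinearMap.adjoint (L i)) (v i)⟫
              - ⟪xbar, (ContinuousLinearMap.adjoint (L i)) (vbar i)⟫) := by
        intro i
        have e3 : ⟪v i - vbar i, q i⟫ + ⟪v i - vbar i, lgrad i (vbar i)⟫
            = ⟪v i - vbar i, L i xbar - r i⟫ := by
          rw [← inner_add_right]
          congr 1
          show (L i xbar - r i) - lgrad i (vbar i) + lgrad i (vbar i) = L i xbar - r i
          abel
        have e4 : ⟪v i - vbar i, L i xbar - r i⟫
            = ⟪v i - vbar i, L i xbar⟫ - ⟪v i - vbar i, r i⟫ := inner_sub_right _ _ _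
        have e5 : ⟪v i - vbar i, L i xbar⟫
            = ⟪xbar, (ContinuousLinearMap.adjoint (L i)) (v i)⟫
              - ⟪xbar, (ContinuousLinearMap.adjoint (L i)) (vbar i)⟫ := by
          rw [real_inner_comm (L i xbar) (v i - vbar i), hadj i xbar (v i - vbar i), map_sub,
            inner_sub_right]
        have e6 : ⟪v i - vbar i, r i⟫ = ⟪v i, r i⟫ - ⟪vbar i, r i⟫ := inner_sub_left _ _ _
        linarith [e3, e4, e5, e6]
      have hsum : ∑ i, ((Γ i + ⟪v i - vbar i, q i⟫)
          + (lstar i (vbar i) + ⟪v i - vbar i, lgrad i (vbar i)⟫) + ⟪v i, r i⟫)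
          = (∑ i, (Γ i + lstar i (vbar i) + ⟪vbar i, r i⟫))
            + ((∑ i, ⟪xbar, (ContinuousLinearMap.adjoint (L i)) (v i)⟫)
              - ∑ i, ⟪xbar, (ContinuousLinearMap.adjoint (L i)) (vbar i)⟫) := by
        rw [← Finset.sum_sub_distrib, ← Finset.sum_add_distrib]
        exact Finset.sum_congr rfl fun i _ => ei i
      have hb2 : ⟪xbar, z - ∑ i, (ContinuousLinearMap.adjoint (L i)) (v i)⟫
          = ⟪xbar, z⟫ - ∑ i, ⟪xbar, (ContinuousLinearMap.adjoint (L i)) (v i)⟫ := by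
        rw [inner_sub_right, inner_sum]
      have hc2 : ⟪xbar, u0⟫ = ⟪xbar, z⟫ - ⟪xbar, h' xbar⟫
          - ∑ i, ⟪xbar, (ContinuousLinearMap.adjoint (L i)) (vbar i)⟫ := by
        rw [hu0def, inner_sub_right, inner_sub_right, inner_sum]
      rw [hC'def, hD'def]
      linarith [hsum, hb2, hc2]
    exact hstep1.trans ((EReal.coe_le_coe_iff.2 hCD').trans hstep3)
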